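/- Given a short exact sequence 0 → A → B → C → 0 of R-modules with A L_n-injective, B is L_n-injective if and only if C is L_n-injective. -/

import Mathlib

open CategoryTheory

/-- Flatness of a module over an arbitrary (possibly noncommutative) ring,
via the equational criterion: every relation is a consequence of trivial relations. -/
def IsFlatMod (R : Type) [Ring R] (M : Type) [AddCommGroup M] [Module R M] : Prop :=
  ∀ (ι : Type) (_ : Fintype ι) (r : ι → R) (x : ι → M),
    (∑ i, r i • x i = 0) →
      ∃ (κ : Type) (_ : Fintype κ) (a : ι → κ → R) (y : κ → M),
        (∀ i, x i = ∑ j, a i j • y j) ∧ ∀ j, (∑ i, r i * a i j) = 0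

variable (R : Type) [Ring R]

/-- `Ext^n_R(M, N) = 0`. -/
def extVanish (n : ℕ) (M N : ModuleCat.{0} R) : Prop :=
  Subsingleton (((Ext ℤ (ModuleCat.{0} R) n).obj (Opposite.op M)).obj N)

/-- `M` has flat dimension at most `n`. -/
def fdLE : ℕ → ModuleCat.{0} R → Prop
  | 0, M => IsFlatMod R M
  | n+1, M => ∃ (K F : ModuleCat.{0} R) (f : K ⟶ F) (g : F ⟶ M),
      IsFlatMod R F ∧ Function.Injective f ∧ Function.Surjective g ∧
        Function.Exact f g ∧ fdLE n K

/-- `W` is `L_n`-injective: `Ext^1_R(M, W) = 0` for every `M` of flat dimension at most `n`. -/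
def LnInj (n : ℕ) (W : ModuleCat.{0} R) : Prop :=
  ∀ M : ModuleCat.{0} R, fdLE R n M → extVanish R 1 M W

section Aux
open Classical
variable {R}


section Algebra
variable {M : Type} [AddCommGroup M] [Module R M]

private lemma sumsum {α β : Type} [Fintype α] [Fintype β] (a : α → R) (c : α → β → R)
    (u : β → M) : ∑ i, a i • (∑ j, c i j • u j) = ∑ j, (∑ i, a i * c i j) • u j := by
  simp_rw [Finset.smul_sum, smul_smul, Finset.sum_smul]
  rw [Finset.sum_comm]

/-- systems of linear equations over a flat module can be trivialized -/
lemma IsFlatMod.sys (hM : IsFlatMod R M) (n : ℕ) (ι : Type) [Fintype ι]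
    (a : Fin n → ι → R) (y : ι → M) (h : ∀ k, ∑ i, a k i • y i = 0) :
    ∃ (κ : Type) (_ : Fintype κ) (b : ι → κ → R) (z : κ → M),
      (∀ i, y i = ∑ j, b i j • z j) ∧ ∀ k j, (∑ i, a k i * b i j) = 0 := by
  induction n generalizing ι y with
  | zero =>
    exact ⟨ι, inferInstance, fun i j => if i = j then 1 else 0, y,
      fun i => by simp [Finset.sum_ite_eq], fun k => k.elim0⟩
  | succ m ih =>
    obtain ⟨κ₁, _, c, u, hc1, hc2⟩ :=
      hM ι inferInstance (a (Fin.last m)) y (h (Fin.last m))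
    have h' : ∀ k : Fin m, ∑ j, (∑ i, a k.castSucc i * c i j) • u j = 0 := by
      intro k
      rw [← sumsum]
      rw [show ∑ i, a k.castSucc i • (∑ j, c i j • u j) = ∑ i, a k.castSucc i • y i from
        Finset.sum_congr rfl fun i _ => by rw [← hc1 i], h]
    obtain ⟨κ₂, _, b', z, hb1, hb2⟩ := ih κ₁ (fun k j => ∑ i, a k.castSucc i * c i j) u h'
    refine ⟨κ₂, inferInstance, fun i l => ∑ j, c i j * b' j l, z, ?_, ?_⟩
    · intro i
      rw [hc1 i, show ∑ j, c i j • u j = ∑ j, c i j • (∑ l, b' j l • z l) from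
        Finset.sum_congr rfl fun j _ => by rw [← hb1 j], sumsum]
    · intro k l
      induction k using Fin.lastCases with
      | last =>
        have : ∑ i, a (Fin.last m) i * (∑ j, c i j * b' j l)
            = ∑ j, (∑ i, a (Fin.last m) i * c i j) * b' j l := by
          simp_rw [Finset.mul_sum, Finset.sum_mul, mul_assoc]
          rw [Finset.sum_comm]
        rw [this]
        simp [hc2]
      | cast k =>
        have : ∑ i, a k.castSucc i * (∑ j, c i j * b' j l)
            = ∑ j, (∑ i, a k.castSucc i * c i j) * b' j l := by
          simp_rw [Finset.mul_sum, Finset.sum_mul, mul_assoc]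
          rw [Finset.sum_comm]
        rw [this]
        exact hb2 k l

variable {N : Type} [AddCommGroup N] [Module R N]

lemma IsFlatMod.of_equiv (e : M ≃ₗ[R] N) (hM : IsFlatMod R M) : IsFlatMod R N := by
  intro ι _ r x hx
  obtain ⟨κ, _, a, y, h1, h2⟩ := hM ι inferInstance r (fun i => e.symm (x i)) (by
    apply e.injective
    rw [map_zero, map_sum]
    simp_rw [map_smul, e.apply_symm_apply]
    exact hx)
  refine ⟨κ, inferInstance, a, fun j => e (y j), fun i => ?_, h2⟩
  have := congrArg e (h1 i)
  rw [e.apply_symm_apply, map_sum] at this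
  simpa [map_smul] using this

lemma IsFlatMod.of_subsingleton [Subsingleton M] : IsFlatMod R M := by
  intro ι _ r x _
  exact ⟨Empty, inferInstance, fun _ j => j.elim, fun j => j.elim,
    fun i => Subsingleton.elim _ _, fun j => j.elim⟩

lemma IsFlatMod.finsupp (σ : Type) : IsFlatMod R (σ →₀ R) := by
  intro ι _ r x hx
  classical
  let S : Finset σ := Finset.univ.biUnion fun i => (x i).support
  refine ⟨↥S, inferInstance, fun i j => x i j.1, fun j => Finsupp.single j.1 1, ?_, ?_⟩
  · intro i
    ext t
    rw [Finsupp.finset_sum_apply]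
    simp_rw [Finsupp.smul_single, smul_eq_mul, mul_one, Finsupp.single_apply]
    by_cases ht : t ∈ S
    · rw [Finset.sum_eq_single (⟨t, ht⟩ : ↥S)]
      · simp
      · intro b _ hb
        simp only [ite_eq_right_iff]
        intro hbt
        exact absurd (Subtype.ext hbt) hb
      · intro habs
        exact absurd (Finset.mem_univ _) habs
    · have hxt : x i t = 0 := by
        by_contra hne
        exact ht (Finset.mem_biUnion.2 ⟨i, Finset.mem_univ i, Finsupp.mem_support_iff.2 hne⟩)
      rw [hxt, Finset.sum_eq_zero]
      intro b _
      simp only [ite_eq_right_iff]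
      intro hbt
      exact absurd hbt (fun h => ht (h ▸ b.2))
  · intro j
    have := congrArg (fun v : σ →₀ R => v j.1) hx
    simpa [Finsupp.finset_sum_apply, Finsupp.smul_apply, smul_eq_mul] using this

lemma IsFlatMod.of_retract {F : Type} [AddCommGroup F] [Module R F]
    (hF : IsFlatMod R F) (i : M →ₗ[R] F) (pr : F →ₗ[R] M) (hpi : ∀ m, pr (i m) = m) :
    IsFlatMod R M := by
  intro ι _ r x hx
  obtain ⟨κ, _, a, y, h1, h2⟩ := hF ι inferInstance r (fun t => i (x t)) (by
    rw [← map_zero i, ← hx, map_sum]; simp_rw [map_smul])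
  refine ⟨κ, inferInstance, a, fun j => pr (y j), fun t => ?_, h2⟩
  have := congrArg pr (h1 t)
  rw [hpi, map_sum] at this
  simpa [map_smul] using this

lemma Module.Projective.isFlatMod [Module.Projective R M] : IsFlatMod R M := by
  obtain ⟨s, hs⟩ := Module.Projective.out (R := R) (P := M)
  exact (IsFlatMod.finsupp M).of_retract s (Finsupp.linearCombination R id) hs

/-- kernel of a surjection from a flat module onto a flat module is flat -/
lemma IsFlatMod.ker_flat (p : M →ₗ[R] N) (hp : Function.Surjective p)
    (hM : IsFlatMod R M) (hN : IsFlatMod R N) : IsFlatMod R ↥(LinearMap.ker p) := by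
  intro ι _ r k hk
  obtain ⟨κ₁, _, a, y, h1, h2⟩ := hM ι inferInstance r (fun i => (k i : M)) (by
    rw [← Submodule.coe_zero (p := LinearMap.ker p), ← hk]
    push_cast
    rfl)
  -- relations in N : for each i, ∑ j, a i j • p (y j) = 0
  obtain ⟨e⟩ := Fintype.truncEquivFin ι
  have hsys : ∀ (t : Fin (Fintype.card ι)), ∑ j, a (e.symm t) j • p (y j) = 0 := by
    intro t
    have : p ((k (e.symm t) : M)) = 0 := (k (e.symm t)).2
    rw [h1 (e.symm t), map_sum] at this
    simpa [map_smul] using this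
  obtain ⟨κ₂, _, b, z, hb1, hb2⟩ := hN.sys (Fintype.card ι) κ₁
    (fun t j => a (e.symm t) j) (fun j => p (y j)) hsys
  choose w hw using fun l => hp (z l)
  have hker : ∀ j, y j - ∑ l, b j l • w l ∈ LinearMap.ker p := by
    intro j
    rw [LinearMap.mem_ker, map_sub, map_sum]
    simp_rw [map_smul, hw]
    rw [hb1 j, sub_self]
  refine ⟨κ₁, inferInstance, a, fun j => ⟨y j - ∑ l, b j l • w l, hker j⟩, ?_, ?_⟩
  · intro i
    apply Subtype.ext
    push_cast
    rw [show (∑ j, a i j • (⟨y j - ∑ l, b j l • w l, hker j⟩ : ↥(LinearMap.ker p)) : M)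
      = ∑ j, a i j • (y j - ∑ l, b j l • w l) from by push_cast; rfl]
    simp_rw [smul_sub]
    rw [Finset.sum_sub_distrib, ← h1 i, sumsum]
    have : ∀ l, (∑ j, a i j * b j l) • w l = 0 := by
      intro l
      have := hb2 (e i) l
      rw [e.symm_apply_apply] at this
      rw [this, zero_smul]
    rw [Finset.sum_congr rfl fun l _ => this l, Finset.sum_const, smul_zero, sub_zero]
  · exact h2

/-- an extension of a flat module by a flat module is flat -/
lemma IsFlatMod.extension (p : M →ₗ[R] N) (hp : Function.Surjective p)
    (hker : IsFlatMod R ↥(LinearMap.ker p)) (hN : IsFlatMod R N) : IsFlatMod R M := by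
  intro ι _ r x hx
  obtain ⟨κ₁, _, a, ybar, h1, h2⟩ := hN ι inferInstance r (fun i => p (x i)) (by
    rw [← map_zero p, ← hx, map_sum]; simp_rw [map_smul])
  choose y hy using fun j => hp (ybar j)
  have hker' : ∀ i, x i - ∑ j, a i j • y j ∈ LinearMap.ker p := by
    intro i
    rw [LinearMap.mem_ker, map_sub, map_sum]
    simp_rw [map_smul, hy]
    rw [← h1 i, sub_self]
  obtain ⟨κ₂, _, b, z, hb1, hb2⟩ := hker ι inferInstance r
    (fun i => ⟨x i - ∑ j, a i j • y j, hker' i⟩) (by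
      apply Subtype.ext
      push_cast
      rw [show (∑ i, r i • (⟨x i - ∑ j, a i j • y j, hker' i⟩ : ↥(LinearMap.ker p)) : M)
        = ∑ i, r i • (x i - ∑ j, a i j • y j) from by push_cast; rfl]
      simp_rw [smul_sub]
      rw [Finset.sum_sub_distrib, hx, sumsum]
      have : ∀ j, (∑ i, r i * a i j) • y j = 0 := fun j => by rw [h2 j, zero_smul]
      rw [Finset.sum_congr rfl fun j _ => this j, Finset.sum_const, smul_zero, zero_sub, neg_zero])
  refine ⟨κ₁ ⊕ κ₂, inferInstance, fun i => Sum.elim (a i) (b i),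
    Sum.elim y (fun l => (z l : M)), ?_, ?_⟩
  · intro i
    rw [Fintype.sum_sum_type]
    simp only [Sum.elim_inl, Sum.elim_inr]
    have h3 := congrArg (Submodule.subtype (LinearMap.ker p)) (hb1 i)
    simp only [Submodule.coe_subtype, map_sum] at h3
    push_cast at h3
    rw [← h3]
    simp [sub_add_cancel]
  · intro j
    rcases j with j | l
    · simpa using h2 j
    · simpa using hb2 l

end Algebra

section FdLE
open ModuleCat

lemma fdLE_of_equiv {M N : ModuleCat.{0} R} (e : M ≃ₗ[R] N) (m : ℕ)
    (h : fdLE R m M) : fdLE R m N := by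
  cases m with
  | zero => exact IsFlatMod.of_equiv e h
  | succ m =>
    obtain ⟨K, F, f, g, hF, hf, hg, hfg, hK⟩ := h
    refine ⟨K, F, f, g ≫ ModuleCat.ofHom e.toLinearMap, hF, hf,
      fun y => by
        obtain ⟨x, hx⟩ := hg (e.symm y)
        exact ⟨x, show e (g x) = y from by rw [hx]; exact e.apply_symm_apply y⟩, ?_, hK⟩
    intro y
    constructor
    · intro h
      exact (hfg y).1 (e.map_eq_zero_iff.mp (show e (g y) = 0 from h))
    · intro h
      show e (g y) = 0
      rw [(hfg y).2 h, map_zero]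

lemma fdLE_punit (m : ℕ) : fdLE R m (of R PUnit) := by
  induction m with
  | zero => exact IsFlatMod.of_subsingleton
  | succ m ih =>
    refine ⟨of R PUnit, of R PUnit, 𝟙 _, 𝟙 _, IsFlatMod.of_subsingleton,
      fun a b _ => Subsingleton.elim a b, fun y => ⟨y, rfl⟩, ?_, ih⟩
    intro y
    constructor
    · intro _; exact ⟨y, rfl⟩
    · intro _; exact Subsingleton.elim _ _

lemma IsFlatMod.fdLE {M : ModuleCat.{0} R} (hM : IsFlatMod R M) (m : ℕ) : fdLE R m M := by
  cases m with
  | zero => exact hM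
  | succ m =>
    refine ⟨of R PUnit, M, 0, 𝟙 M, hM, fun a b _ => Subsingleton.elim a b,
      fun y => ⟨y, rfl⟩, ?_, fdLE_punit m⟩
    intro y
    constructor
    · intro h; exact ⟨PUnit.unit, h.symm⟩
    · rintro ⟨x, rfl⟩; rfl

lemma fdLE_succ_of_ker {F X : ModuleCat.{0} R} (θ : F ⟶ X) (hθ : Function.Surjective θ)
    (hF : IsFlatMod R F) {m : ℕ} (h : fdLE R m (of R ↥(LinearMap.ker θ.hom))) :
    fdLE R (m+1) X := by
  refine ⟨of R ↥(LinearMap.ker θ.hom), F, ModuleCat.ofHom (LinearMap.ker θ.hom).subtype, θ, hF,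
    Subtype.coe_injective, hθ, ?_, h⟩
  intro y
  constructor
  · intro hy; exact ⟨⟨y, hy⟩, rfl⟩
  · rintro ⟨⟨x, hx⟩, rfl⟩; exact hx

lemma fdLE_mono {M : ModuleCat.{0} R} (m : ℕ) (h : fdLE R m M) : fdLE R (m+1) M := by
  induction m generalizing M with
  | zero =>
    let ρ : of R (↥M →₀ R) ⟶ M := ModuleCat.ofHom (Finsupp.linearCombination R id)
    have hρ : Function.Surjective ρ := fun x => ⟨Finsupp.single x 1,
      show Finsupp.linearCombination R id (Finsupp.single x 1) = x by
        rw [Finsupp.linearCombination_single, one_smul]; rfl⟩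
    exact fdLE_succ_of_ker ρ hρ (IsFlatMod.finsupp _)
      (IsFlatMod.ker_flat _ hρ (IsFlatMod.finsupp _) h)
  | succ m ih =>
    obtain ⟨K, F, f, g, hF, hf, hg, hfg, hK⟩ := h
    exact ⟨K, F, f, g, hF, hf, hg, hfg, ih hK⟩

end FdLE

section FdLE2
open ModuleCat

lemma fdLE_ker_of_quotient_flat {X F' : ModuleCat.{0} R} (p : X ⟶ F')
    (hp : Function.Surjective p) (hF' : IsFlatMod R F') (m : ℕ) (h : fdLE R m X) :
    fdLE R m (of R ↥(LinearMap.ker p.hom)) := by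
  cases m with
  | zero => exact IsFlatMod.ker_flat p.hom hp h hF'
  | succ m =>
    obtain ⟨W, G, f, ρ, hG, hf, hρ, hfρ, hW⟩ := h
    have hcomp : Function.Surjective (ρ ≫ p) := fun y => by
      obtain ⟨x, hx⟩ := hp y
      obtain ⟨z, hz⟩ := hρ x
      exact ⟨z, show p (ρ z) = y from by rw [hz, hx]⟩
    have hGflat : IsFlatMod R (of R ↥(LinearMap.ker (ρ ≫ p).hom)) :=
      IsFlatMod.ker_flat (ρ ≫ p).hom hcomp hG hF'
    -- the map θ' : ker (ρ ≫ p) ⟶ ker p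
    have hmem : ∀ x : ↥(LinearMap.ker (ρ ≫ p).hom), ρ x.1 ∈ LinearMap.ker p.hom := fun x => x.2
    let θ' : of R ↥(LinearMap.ker (ρ ≫ p).hom) ⟶ of R ↥(LinearMap.ker p.hom) :=
      ModuleCat.ofHom (LinearMap.codRestrict _ (ρ.hom ∘ₗ (LinearMap.ker (ρ ≫ p).hom).subtype) hmem)
    have hθ'surj : Function.Surjective θ' := by
      rintro ⟨x, hx⟩
      obtain ⟨z, hz⟩ := hρ x
      have hz2 : z ∈ LinearMap.ker (ρ ≫ p).hom := by
        show p (ρ z) = 0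
        rw [hz]; exact hx
      exact ⟨⟨z, hz2⟩, Subtype.ext (show ρ z = x from hz)⟩
    -- ker θ' ≃ W
    have hwmem : ∀ w : ↥W, f w ∈ LinearMap.ker (ρ ≫ p).hom := by
      intro w
      have : ρ (f w) = 0 := (hfρ (f w)).2 ⟨w, rfl⟩
      show p (ρ (f w)) = 0
      rw [this, map_zero]
    let e0 : ↥W →ₗ[R] ↥(LinearMap.ker θ'.hom) :=
      LinearMap.codRestrict _ (LinearMap.codRestrict _ f.hom hwmem) (by
        intro w
        show θ' ⟨f w, hwmem w⟩ = 0
        apply Subtype.ext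
        show ρ (f w) = 0
        exact (hfρ (f w)).2 ⟨w, rfl⟩)
    have he0 : Function.Bijective e0 := by
      constructor
      · intro a b hab
        apply hf
        have := congrArg (fun v : ↥(LinearMap.ker θ'.hom) => (v.1.1 : ↥G)) hab
        exact this
      · rintro ⟨⟨z, hz1⟩, hz2⟩
        have : ρ z = 0 := by
          have := congrArg (fun v : ↥(LinearMap.ker p.hom) => (v : ↥X)) hz2
          exact this
        obtain ⟨w, hw⟩ := (hfρ z).1 this
        exact ⟨w, Subtype.ext (Subtype.ext (show f w = z from hw))⟩
    exact fdLE_succ_of_ker θ' hθ'surj hGflat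
      (fdLE_of_equiv (LinearEquiv.ofBijective e0 he0) m hW)

end FdLE2

section FdLE3
open ModuleCat

lemma fdLE_extension {X E : ModuleCat.{0} R} (p : X ⟶ E) (hp : Function.Surjective p)
    (hE : IsFlatMod R E) (m : ℕ) (h : fdLE R m (of R ↥(LinearMap.ker p.hom))) :
    fdLE R m X := by
  induction m generalizing X E p with
  | zero => exact IsFlatMod.extension p.hom hp h hE
  | succ m ih =>
    obtain ⟨K', G, f'', q, hG, hf'', hq, hfq, hK'⟩ := h
    -- a free module covering E, with a lift to X
    have sec : ∀ e : ↥E, ∃ x : ↥X, p x = e := hp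
    choose s hs using sec
    let lam : (↥E →₀ R) →ₗ[R] ↥X := Finsupp.linearCombination R s
    let ρ₀ : (↥E →₀ R) →ₗ[R] ↥E := Finsupp.linearCombination R id
    have hplam : ∀ u, p (lam u) = ρ₀ u := by
      intro u
      show p.hom (Finsupp.linearCombination R s u) = ρ₀ u
      rw [Finsupp.apply_linearCombination, show ⇑p ∘ s = (id : ↥E → ↥E) from funext hs]
    have hρ₀ : Function.Surjective ρ₀ := fun e => ⟨Finsupp.single e 1, by
      have h1 : ρ₀ (Finsupp.single e 1) = (1:R) • (id e : ↥E) := by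
        simp [ρ₀]
      rw [h1, one_smul]; rfl⟩
    -- the flat module Y = G × (E →₀ R) and the surjection θ : Y → X
    let Y : ModuleCat.{0} R := of R (↥G × (↥E →₀ R))
    have hGY : ∀ g : ↥G, (⟨g, 0⟩ : ↥Y) ∈ LinearMap.ker (LinearMap.snd R ↥G (↥E →₀ R)) := by
      intro g; exact rfl
    have hYflat : IsFlatMod R ↥Y := by
      apply IsFlatMod.extension (LinearMap.snd R ↥G (↥E →₀ R))
        (fun u => ⟨⟨0, u⟩, rfl⟩) ?_ (IsFlatMod.finsupp _)
      have eG : ↥G ≃ₗ[R] ↥(LinearMap.ker (LinearMap.snd R ↥G (↥E →₀ R))) := by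
        refine LinearEquiv.ofBijective (LinearMap.codRestrict _
          (LinearMap.prod LinearMap.id 0) (fun g => rfl)) ⟨?_, ?_⟩
        · intro a b hab
          exact congrArg (fun v : ↥(LinearMap.ker (LinearMap.snd R ↥G (↥E →₀ R))) => v.1.1) hab
        · rintro ⟨⟨g, u⟩, hu⟩
          have : u = 0 := hu
          exact ⟨g, Subtype.ext (by simp [this]; rfl)⟩
      exact IsFlatMod.of_equiv eG hG
    let θ : Y ⟶ X := ModuleCat.ofHom ((LinearMap.ker p.hom).subtype ∘ₗ q.hom ∘ₗ LinearMap.fst R ↥G (↥E →₀ R)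
      + lam ∘ₗ LinearMap.snd R ↥G (↥E →₀ R))
    have hθval : ∀ y : ↥Y, θ y = ((q y.1).1 : ↥X) + lam y.2 :=
      fun y => rfl
    have hθ : Function.Surjective θ := by
      intro x
      obtain ⟨u, hu⟩ := hρ₀ (p x)
      have hker : x - lam u ∈ LinearMap.ker p.hom := by
        rw [LinearMap.mem_ker, map_sub, hplam, hu, sub_self]
      obtain ⟨g, hg⟩ := hq ⟨x - lam u, hker⟩
      refine ⟨⟨g, u⟩, (hθval ⟨g, u⟩).trans ?_⟩
      rw [hg]
      show (x - lam u) + lam u = x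
      rw [sub_add_cancel]
    -- analysis of ker θ
    have hpθ : ∀ y : ↥Y, p (θ y) = ρ₀ y.2 := by
      intro y
      rw [hθval y, map_add, hplam]
      have : p ((q y.1).1 : ↥X) = 0 := (q y.1).2
      rw [this, zero_add]
    have hmemS : ∀ y : ↥(LinearMap.ker θ.hom), (y.1.2 : ↥E →₀ R) ∈ LinearMap.ker ρ₀ := by
      intro y
      have := hpθ y.1
      rw [y.2, map_zero] at this
      exact this.symm
    let S : ModuleCat.{0} R := of R ↥(LinearMap.ker ρ₀)
    have hSflat : IsFlatMod R ↥S := IsFlatMod.ker_flat ρ₀ hρ₀ (IsFlatMod.finsupp _) hE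
    let ν : of R ↥(LinearMap.ker θ.hom) ⟶ S :=
      ModuleCat.ofHom (LinearMap.codRestrict _
        ((LinearMap.snd R ↥G (↥E →₀ R)) ∘ₗ (LinearMap.ker θ.hom).subtype) hmemS)
    have hν : Function.Surjective ν := by
      rintro ⟨u, hu⟩
      have hlamu : lam u ∈ LinearMap.ker p.hom := by
        rw [LinearMap.mem_ker, hplam, hu]
      have hneg : -(lam u) ∈ LinearMap.ker p.hom := neg_mem hlamu
      obtain ⟨g, hg⟩ := hq ⟨-(lam u), hneg⟩
      have hmem : (⟨g, u⟩ : ↥Y) ∈ LinearMap.ker θ.hom := by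
        show θ ⟨g, u⟩ = 0
        refine (hθval ⟨g, u⟩).trans ?_
        rw [hg]
        show -(lam u) + lam u = 0
        rw [neg_add_cancel]
      exact ⟨⟨⟨g, u⟩, hmem⟩, Subtype.ext rfl⟩
    -- ker ν ≃ K'
    have hqf : ∀ k : ↥K', q (f'' k) = 0 := by
      intro k
      have := (hfq (f'' k)).2 ⟨k, rfl⟩
      exact this
    have hmemθ : ∀ k : ↥K', (⟨f'' k, 0⟩ : ↥Y) ∈ LinearMap.ker θ.hom := by
      intro k
      show θ ⟨f'' k, 0⟩ = 0
      refine (hθval ⟨f'' k, 0⟩).trans ?_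
      rw [hqf, map_zero]
      show (0 : ↥X) + 0 = 0
      rw [add_zero]
    let e1 : ↥K' →ₗ[R] ↥(LinearMap.ker ν.hom) :=
      LinearMap.codRestrict _
        (LinearMap.codRestrict _ (LinearMap.prod f''.hom 0) hmemθ)
        (fun k => Subtype.ext rfl)
    have he1 : Function.Bijective e1 := by
      constructor
      · intro a b hab
        exact hf'' (congrArg (fun v : ↥(LinearMap.ker ν.hom) => v.1.1.1) hab)
      · rintro ⟨⟨⟨g, u⟩, hθy⟩, hνy⟩
        have hu : u = 0 := congrArg (fun v : ↥S => v.1) hνy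
        have hqg : q g = 0 := by
          apply Subtype.ext
          have h2 : ((q g).1 : ↥X) + lam u = 0 := (hθval ⟨g, u⟩).symm.trans hθy
          show ((q g).1 : ↥X) = 0
          have h3 : lam u = 0 := by rw [hu, map_zero]
          rw [h3, add_zero] at h2
          exact h2
        obtain ⟨k, hk⟩ := (hfq g).1 hqg
        refine ⟨k, Subtype.ext (Subtype.ext ?_)⟩
        show ((⟨f'' k, 0⟩ : ↥Y) : ↥Y) = ⟨g, u⟩
        rw [hu, hk]
    have hkerν : fdLE R m (of R ↥(LinearMap.ker ν.hom)) :=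
      fdLE_of_equiv (LinearEquiv.ofBijective e1 he1) m hK'
    have hN : fdLE R m (of R ↥(LinearMap.ker θ.hom)) := ih ν hν hSflat hkerν
    exact fdLE_succ_of_ker θ hθ hYflat hN

end FdLE3

section FdLE4
open ModuleCat

lemma fdLE_syzygy {M E : ModuleCat.{0} R} (p : E ⟶ M) (hp : Function.Surjective p)
    (hE : IsFlatMod R E) (m : ℕ) (h : fdLE R (m+1) M) :
    fdLE R m (of R ↥(LinearMap.ker p.hom)) := by
  obtain ⟨K, F', f', g', hF', hf', hg', hfg', hK⟩ := h
  let q : (↥E × ↥F') →ₗ[R] ↥M :=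
    (p.hom ∘ₗ LinearMap.fst R ↥E ↥F') - (g'.hom ∘ₗ LinearMap.snd R ↥E ↥F')
  have hqval : ∀ y : ↥E × ↥F', q y = p y.1 - g' y.2 := fun y => rfl
  let X : ModuleCat.{0} R := of R ↥(LinearMap.ker q)
  let π₁ : X ⟶ E := ModuleCat.ofHom (LinearMap.fst R ↥E ↥F' ∘ₗ (LinearMap.ker q).subtype)
  have hπ₁ : Function.Surjective π₁ := by
    intro e
    obtain ⟨w, hw⟩ := hg' (p e)
    have hmem : (⟨e, w⟩ : ↥E × ↥F') ∈ LinearMap.ker q := by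
      show q ⟨e, w⟩ = 0
      refine (hqval ⟨e, w⟩).trans ?_
      rw [hw, sub_self]
    exact ⟨⟨⟨e, w⟩, hmem⟩, rfl⟩
  -- ker π₁ ≃ K
  have hmemK : ∀ k : ↥K, (⟨0, f' k⟩ : ↥E × ↥F') ∈ LinearMap.ker q := by
    intro k
    show q ⟨0, f' k⟩ = 0
    refine (hqval ⟨0, f' k⟩).trans ?_
    rw [map_zero, (hfg'.apply_apply_eq_zero k : g' (f' k) = 0), sub_zero]
  let e2 : ↥K →ₗ[R] ↥(LinearMap.ker π₁.hom) :=
    LinearMap.codRestrict _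
      (LinearMap.codRestrict _ (LinearMap.prod 0 f'.hom) hmemK) (fun k => rfl)
  have he2 : Function.Bijective e2 := by
    constructor
    · intro a b hab
      exact hf' (congrArg (fun v : ↥(LinearMap.ker π₁.hom) => v.1.1.2) hab)
    · rintro ⟨⟨⟨e, w⟩, hqm⟩, hπm⟩
      have he : e = 0 := hπm
      have hgw : g' w = 0 := by
        have h2 : p e - g' w = 0 := (hqval ⟨e, w⟩).symm.trans hqm
        rw [he, map_zero, zero_sub, neg_eq_zero] at h2
        exact h2
      obtain ⟨k, hk⟩ := (hfg' w).1 hgw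
      refine ⟨k, Subtype.ext (Subtype.ext ?_)⟩
      show ((0 : ↥E), f' k) = (e, w)
      rw [he, hk]
  have hXfd : fdLE R m X :=
    fdLE_extension π₁ hπ₁ hE m (fdLE_of_equiv (LinearEquiv.ofBijective e2 he2) m hK)
  -- π₂ : X ⟶ F' and its kernel
  let π₂ : X ⟶ F' := ModuleCat.ofHom (LinearMap.snd R ↥E ↥F' ∘ₗ (LinearMap.ker q).subtype)
  have hπ₂ : Function.Surjective π₂ := by
    intro w
    obtain ⟨e, he⟩ := hp (g' w)
    have hmem : (⟨e, w⟩ : ↥E × ↥F') ∈ LinearMap.ker q := by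
      show q ⟨e, w⟩ = 0
      refine (hqval ⟨e, w⟩).trans ?_
      rw [he, sub_self]
    exact ⟨⟨⟨e, w⟩, hmem⟩, rfl⟩
  have hker₂ : fdLE R m (of R ↥(LinearMap.ker π₂.hom)) :=
    fdLE_ker_of_quotient_flat π₂ hπ₂ hF' m hXfd
  -- ker π₂ ≃ ker p
  have hmemp : ∀ x : ↥(LinearMap.ker p.hom), (⟨x.1, 0⟩ : ↥E × ↥F') ∈ LinearMap.ker q := by
    intro x
    show q ⟨x.1, 0⟩ = 0
    refine (hqval ⟨x.1, 0⟩).trans ?_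
    rw [x.2, map_zero, sub_zero]
  let e3 : ↥(LinearMap.ker p.hom) →ₗ[R] ↥(LinearMap.ker π₂.hom) :=
    LinearMap.codRestrict _
      (LinearMap.codRestrict _ (LinearMap.prod ((LinearMap.ker p.hom).subtype) 0) hmemp)
      (fun x => rfl)
  have he3 : Function.Bijective e3 := by
    constructor
    · intro a b hab
      exact Subtype.ext (congrArg (fun v : ↥(LinearMap.ker π₂.hom) => v.1.1.1) hab)
    · rintro ⟨⟨⟨e, w⟩, hqm⟩, hπm⟩
      have hw : w = 0 := hπm
      have hpe : e ∈ LinearMap.ker p.hom := by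
        have h2 : p e - g' w = 0 := (hqval ⟨e, w⟩).symm.trans hqm
        rw [hw, map_zero, sub_zero] at h2
        exact h2
      refine ⟨⟨e, hpe⟩, Subtype.ext (Subtype.ext ?_)⟩
      show ((e : ↥E), (0 : ↥F')) = (e, w)
      rw [hw]
  exact fdLE_of_equiv (LinearEquiv.ofBijective e3 he3).symm m hker₂

lemma fdLE_ker_final {M E : ModuleCat.{0} R} (p : E ⟶ M) (hp : Function.Surjective p)
    (hE : IsFlatMod R E) (m : ℕ) (h : fdLE R m M) :
    fdLE R m (of R ↥(LinearMap.ker p.hom)) :=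
  fdLE_syzygy p hp hE m (fdLE_mono m h)

end FdLE4

section ExtLayer
open ModuleCat


lemma subsingleton_iff_isZero (M : ModuleCat.{0} ℤ) : Subsingleton M ↔ Limits.IsZero M := by
  constructor
  · intro h; exact ModuleCat.isZero_of_subsingleton M
  · intro h
    refine ⟨fun a b => ?_⟩
    have : (𝟙 M : M ⟶ M) = 0 := h.eq_of_src _ _
    calc a = (𝟙 M : M ⟶ M) a := rfl
    _ = (0 : M ⟶ M) a := by rw [this]
    _ = (𝟙 M : M ⟶ M) b := by rw [this]; rfl
    _ = b := rfl

lemma extVanish_iff_criterion (M N : ModuleCat.{0} R) (P : ProjectiveResolution M) (j : ℕ) :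
    extVanish R (j+1) M N ↔ ∀ φ : P.complex.X (j+1) ⟶ N, P.complex.d (j+2) (j+1) ≫ φ = 0 →
      ∃ ψ : P.complex.X j ⟶ N, P.complex.d (j+1) j ≫ ψ = φ := by
  have e := P.isoExt (R := ℤ) (j+1) N
  rw [extVanish]
  rw [Equiv.subsingleton_congr ⟨e.hom, e.inv, fun x => e.hom_inv_id_apply x,
    fun x => e.inv_hom_id_apply x⟩]
  rw [subsingleton_iff_isZero, ← HomologicalComplex.exactAt_iff_isZero_homology]
  rw [HomologicalComplex.exactAt_iff' _ j (j+1) (j+2) (by simp) (by simp)]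
  rw [ShortComplex.moduleCat_exact_iff]
  constructor
  · intro h φ hφ
    obtain ⟨ψ, hψ⟩ := h φ hφ
    exact ⟨ψ, hψ⟩
  · intro h φ hφ
    obtain ⟨ψ, hψ⟩ := h φ hφ
    exact ⟨ψ, hψ⟩

lemma lift_of_range_le {Pr X Y : ModuleCat.{0} R} [Projective Pr] (u : Pr ⟶ Y) (v : X ⟶ Y)
    (h : LinearMap.range u.hom ≤ LinearMap.range v.hom) : ∃ w : Pr ⟶ X, w ≫ v = u := by
  let v' : X ⟶ of R ↥(LinearMap.range v.hom) := ModuleCat.ofHom (LinearMap.rangeRestrict v.hom)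
  haveI : Epi v' := (ModuleCat.epi_iff_surjective v').2 (fun y => by
    obtain ⟨x, hx⟩ := y.2
    exact ⟨x, Subtype.ext hx⟩)
  let u' : Pr ⟶ of R ↥(LinearMap.range v.hom) :=
    ModuleCat.ofHom (LinearMap.codRestrict _ u.hom (fun x => h ⟨x, rfl⟩))
  refine ⟨Projective.factorThru u' v', ?_⟩
  have hw : Projective.factorThru u' v' ≫ v' = u' := Projective.factorThru_comp u' v'
  apply ModuleCat.hom_ext; apply LinearMap.ext
  intro x
  have h1 : v' ((Projective.factorThru u' v') x) = u' x :=
    congrArg (fun m : Pr ⟶ of R ↥(LinearMap.range v.hom) => m x) hw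
  have h2 := congrArg (fun z : ↥(LinearMap.range v.hom) => (z : ↥Y)) h1
  exact h2

lemma factor_through_mono {A B Pr : ModuleCat.{0} R} (f : A ⟶ B) (hf : Function.Injective f)
    (u : Pr ⟶ B) (h : LinearMap.range u.hom ≤ LinearMap.range f.hom) : ∃ τ : Pr ⟶ A, τ ≫ f = u := by
  let e := LinearEquiv.ofInjective f.hom hf
  refine ⟨ModuleCat.ofHom (e.symm.toLinearMap ∘ₗ LinearMap.codRestrict _ u.hom (fun x => h ⟨x, rfl⟩)), ?_⟩
  apply ModuleCat.hom_ext; apply LinearMap.ext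
  intro x
  show f (e.symm ⟨u x, _⟩) = u x
  have : ∀ y : ↥(LinearMap.range f.hom), f (e.symm y) = (y : ↥B) := by
    intro y
    conv_rhs => rw [← e.apply_symm_apply y]
    rfl
  rw [this]

end ExtLayer

section Chases
open ModuleCat

variable {A B C : ModuleCat.{0} R} (f : A ⟶ B) (g : B ⟶ C)

lemma range_le_of_comp_zero {P' : ModuleCat.{0} R} (hfg : Function.Exact f g)
    (u : P' ⟶ B) (hu : u ≫ g = 0) : LinearMap.range u.hom ≤ LinearMap.range f.hom := by
  rintro b ⟨x, rfl⟩
  have : g (u x) = 0 := congrArg (fun m : P' ⟶ C => m x) hu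
  obtain ⟨a, ha⟩ := (hfg (u x)).1 this
  exact ⟨a, ha⟩

lemma extVanish_middle (hf : Function.Injective f) (hg : Function.Surjective g)
    (hfg : Function.Exact f g) (M : ModuleCat.{0} R)
    (hA1 : extVanish R 1 M A) (hC1 : extVanish R 1 M C) : extVanish R 1 M B := by
  let P := ProjectiveResolution.of M
  rw [extVanish_iff_criterion M A P 0] at hA1
  rw [extVanish_iff_criterion M C P 0] at hC1
  rw [extVanish_iff_criterion M B P 0]
  intro φ hφ
  obtain ⟨σ, hσ⟩ := hC1 (φ ≫ g) (by rw [← Category.assoc, hφ, Limits.zero_comp])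
  obtain ⟨σ', hσ'⟩ := lift_of_range_le σ g (by rw [LinearMap.range_eq_top.2 hg]; exact le_top)
  obtain ⟨τ, hτ⟩ := factor_through_mono f hf (φ - P.complex.d 1 0 ≫ σ')
    (range_le_of_comp_zero f g hfg _ (by
      rw [Preadditive.sub_comp, Category.assoc, hσ', hσ, sub_self]))
  have hτc : P.complex.d 2 1 ≫ τ = 0 := by
    have h1 : (P.complex.d 2 1 ≫ τ) ≫ f = 0 := by
      rw [Category.assoc, hτ, Preadditive.comp_sub, ← Category.assoc, hφ,
        HomologicalComplex.d_comp_d, Limits.zero_comp, sub_zero]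
    apply ModuleCat.hom_ext; apply LinearMap.ext
    intro x
    show τ (P.complex.d 2 1 x) = 0
    apply hf
    rw [map_zero]
    exact congrArg (fun m : P.complex.X 2 ⟶ B => m x) h1
  obtain ⟨ρ, hρ⟩ := hA1 τ hτc
  refine ⟨σ' + ρ ≫ f, ?_⟩
  rw [Preadditive.comp_add, ← Category.assoc, hρ, hτ, add_sub_cancel]

lemma extVanish_right (hf : Function.Injective f) (hg : Function.Surjective g)
    (hfg : Function.Exact f g) (M : ModuleCat.{0} R)
    (hB1 : extVanish R 1 M B) (hA2 : extVanish R 2 M A) : extVanish R 1 M C := by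
  let P := ProjectiveResolution.of M
  rw [extVanish_iff_criterion M B P 0] at hB1
  rw [extVanish_iff_criterion M A P 1] at hA2
  rw [extVanish_iff_criterion M C P 0]
  intro φ hφ
  obtain ⟨ψ, hψ⟩ := lift_of_range_le φ g (by rw [LinearMap.range_eq_top.2 hg]; exact le_top)
  obtain ⟨χ, hχ⟩ := factor_through_mono f hf (P.complex.d 2 1 ≫ ψ)
    (range_le_of_comp_zero f g hfg _ (by rw [Category.assoc, hψ, hφ]))
  have hχc : P.complex.d 3 2 ≫ χ = 0 := by
    have h1 : (P.complex.d 3 2 ≫ χ) ≫ f = 0 := by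
      rw [Category.assoc, hχ, ← Category.assoc, HomologicalComplex.d_comp_d, Limits.zero_comp]
    apply ModuleCat.hom_ext; apply LinearMap.ext
    intro x
    show χ (P.complex.d 3 2 x) = 0
    apply hf
    rw [map_zero]
    exact congrArg (fun m : P.complex.X 3 ⟶ B => m x) h1
  obtain ⟨τ, hτ⟩ := hA2 χ hχc
  obtain ⟨σ, hσ⟩ := hB1 (ψ - τ ≫ f) (by
    rw [Preadditive.comp_sub, ← Category.assoc, hτ, hχ, sub_self])
  refine ⟨σ ≫ g, ?_⟩
  have hfg0 : f ≫ g = 0 := by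
    apply ModuleCat.hom_ext; apply LinearMap.ext
    intro a
    exact hfg.apply_apply_eq_zero a
  rw [← Category.assoc, hσ, Preadditive.sub_comp, Category.assoc, hfg0,
    Limits.comp_zero, hψ, sub_zero]

end Chases

section DimShift
open ModuleCat


lemma range_le_ker_of_comp_zero {X Y Z : ModuleCat.{0} R} (u : X ⟶ Y) (v : Y ⟶ Z)
    (h : u ≫ v = 0) : LinearMap.range u.hom ≤ LinearMap.ker v.hom := by
  rintro b ⟨x, rfl⟩
  exact congrArg (fun m : X ⟶ Z => m x) h

lemma extVanish_two_of_LnInj {A : ModuleCat.{0} R} (n : ℕ) (hA : LnInj R n A)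
    (M : ModuleCat.{0} R) (hM : fdLE R n M) : extVanish R 2 M A := by
  let P := ProjectiveResolution.of M
  -- exactness facts for P
  have hex1 : LinearMap.range (P.complex.d 1 0).hom = LinearMap.ker (P.π.f 0).hom := by
    have h := P.exact₀
    rw [ShortComplex.moduleCat_exact_iff_range_eq_ker] at h
    exact h
  have hex2 : LinearMap.range (P.complex.d 2 1).hom = LinearMap.ker (P.complex.d 1 0).hom := by
    have h := P.exact_succ 0
    rw [ShortComplex.moduleCat_exact_iff_range_eq_ker] at h
    exact h
  have hex3 : LinearMap.range (P.complex.d 3 2).hom = LinearMap.ker (P.complex.d 2 1).hom := by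
    have h := P.exact_succ 1
    rw [ShortComplex.moduleCat_exact_iff_range_eq_ker] at h
    exact h
  -- the syzygy K₀ and its flat dimension
  have hπ0 : Function.Surjective (P.π.f 0) := (ModuleCat.epi_iff_surjective _).1 inferInstance
  let K₀ : ModuleCat.{0} R := of R ↥(LinearMap.ker (P.π.f 0).hom)
  haveI hprojX0 : Module.Projective R ↥(P.complex.X 0) :=
    (IsProjective.iff_projective (R := R) _).mpr (P.projective 0)
  have hK₀fd : fdLE R n K₀ :=
    fdLE_ker_final (P.π.f 0) hπ0 (Module.Projective.isFlatMod) n hM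
  have hK₀ : extVanish R 1 K₀ A := hA K₀ hK₀fd
  -- the augmentation P.X 1 ⟶ K₀
  have haux : ∀ x : ↥(P.complex.X 1), P.π.f 0 (P.complex.d 1 0 x) = 0 :=
    fun x => congrArg (fun m : P.complex.X 1 ⟶ M => m x) P.complex_d_comp_π_f_zero
  let aug : P.complex.X 1 ⟶ K₀ := ModuleCat.ofHom (LinearMap.codRestrict _ (P.complex.d 1 0).hom haux)
  let incl : K₀ ⟶ P.complex.X 0 := ModuleCat.ofHom (LinearMap.ker (P.π.f 0).hom).subtype
  have hinc : aug ≫ incl = P.complex.d 1 0 := rfl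
  have haugsurj : Function.Surjective aug := by
    rintro ⟨y, hy⟩
    rw [← hex1] at hy
    obtain ⟨x, hx⟩ := hy
    exact ⟨x, Subtype.ext hx⟩
  have haugtop : LinearMap.range aug.hom = ⊤ := LinearMap.range_eq_top.2 haugsurj
  have hdaug : P.complex.d 2 1 ≫ aug = 0 := by
    apply ModuleCat.hom_ext; apply LinearMap.ext
    intro x
    apply Subtype.ext
    show P.complex.d 1 0 (P.complex.d 2 1 x) = 0
    exact congrArg (fun m : P.complex.X 2 ⟶ P.complex.X 0 => m x)
      (P.complex.d_comp_d 2 1 0)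
  -- the resolution of K₀
  let Q := ProjectiveResolution.of K₀
  let πQ : Q.complex.X 0 ⟶ K₀ := Q.π.f 0
  have hπQ : Function.Surjective πQ := (ModuleCat.epi_iff_surjective (Q.π.f 0)).1 inferInstance
  have hexQ1 : LinearMap.range (Q.complex.d 1 0).hom = LinearMap.ker πQ.hom := by
    have h := Q.exact₀
    rw [ShortComplex.moduleCat_exact_iff_range_eq_ker] at h
    exact h
  -- comparison maps
  obtain ⟨g0, hg0⟩ := lift_of_range_le (Y := K₀) aug πQ
    (by rw [LinearMap.range_eq_top.2 hπQ]; exact le_top)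
  obtain ⟨g1, hg1⟩ := lift_of_range_le (P.complex.d 2 1 ≫ g0) (Q.complex.d 1 0) (by
    rw [hexQ1]
    exact range_le_ker_of_comp_zero _ _ (by rw [Category.assoc, hg0, hdaug]))
  obtain ⟨f0, hf0⟩ := lift_of_range_le (Y := K₀) πQ aug (by rw [haugtop]; exact le_top)
  obtain ⟨f1, hf1⟩ := lift_of_range_le (Q.complex.d 1 0 ≫ f0) (P.complex.d 2 1) (by
    rw [hex2]
    refine range_le_ker_of_comp_zero _ _ ?_
    rw [Category.assoc, ← hinc, ← Category.assoc f0 aug incl, hf0,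
      ← Category.assoc, show Q.complex.d 1 0 ≫ πQ = 0 from Q.complex_d_comp_π_f_zero, Limits.zero_comp])
  obtain ⟨f2, hf2⟩ := lift_of_range_le (Q.complex.d 2 1 ≫ f1) (P.complex.d 3 2) (by
    rw [hex3]
    refine range_le_ker_of_comp_zero _ _ ?_
    rw [Category.assoc, hf1, ← Category.assoc, Q.complex.d_comp_d, Limits.zero_comp])
  obtain ⟨h0, hh0⟩ := lift_of_range_le (𝟙 (P.complex.X 1) - g0 ≫ f0) (P.complex.d 2 1) (by
    rw [hex2]
    refine range_le_ker_of_comp_zero _ _ ?_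
    rw [Preadditive.sub_comp, Category.id_comp, Category.assoc, ← hinc,
      ← Category.assoc f0 aug incl, hf0, ← Category.assoc, hg0, hinc, sub_self])
  obtain ⟨h1, hh1⟩ := lift_of_range_le
    (𝟙 (P.complex.X 2) - g1 ≫ f1 - P.complex.d 2 1 ≫ h0) (P.complex.d 3 2) (by
    rw [hex3]
    refine range_le_ker_of_comp_zero _ _ ?_
    rw [Preadditive.sub_comp, Preadditive.sub_comp, Category.id_comp,
      Category.assoc g1 f1 _, hf1, Category.assoc, hh0]
    rw [Preadditive.comp_sub, Category.comp_id, ← Category.assoc, hg1,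
      Category.assoc (P.complex.d 2 1) g0 f0]
    abel)
  -- the final chase
  rw [extVanish_iff_criterion M A P 1]
  intro φ hφ
  have hcoc : Q.complex.d 2 1 ≫ (f1 ≫ φ) = 0 := by
    rw [← Category.assoc, ← hf2, Category.assoc, hφ, Limits.comp_zero]
  rw [extVanish_iff_criterion K₀ A Q 0] at hK₀
  obtain ⟨σ, hσ⟩ := hK₀ (f1 ≫ φ) hcoc
  refine ⟨g0 ≫ σ + h0 ≫ φ, ?_⟩
  have key : h1 ≫ (P.complex.d 3 2 ≫ φ) =
      φ - (g1 ≫ f1) ≫ φ - (P.complex.d 2 1 ≫ h0) ≫ φ := by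
    rw [← Category.assoc, hh1, Preadditive.sub_comp, Preadditive.sub_comp, Category.id_comp]
  rw [hφ, Limits.comp_zero] at key
  have hσ' : Q.complex.d 1 0 ≫ σ = f1 ≫ φ := hσ
  have key2 : (g1 ≫ f1) ≫ φ + (P.complex.d 2 1 ≫ h0) ≫ φ = φ := by
    have h5 := key.symm
    rw [sub_sub, sub_eq_zero] at h5
    exact h5.symm
  show P.complex.d 2 1 ≫ (g0 ≫ σ + h0 ≫ φ) = φ
  rw [Preadditive.comp_add, ← Category.assoc, ← Category.assoc, ← hg1,
    Category.assoc g1, hσ', ← Category.assoc g1 f1 φ]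
  exact key2

end DimShift

end Aux

/-- Given a short exact sequence `0 → A → B → C → 0` with `A` `L_n`-injective,
`B` is `L_n`-injective iff `C` is `L_n`-injective. -/
theorem stmt4 (n : ℕ) (A B C : ModuleCat.{0} R) (f : A ⟶ B) (g : B ⟶ C)
    (hf : Function.Injective f) (hg : Function.Surjective g) (hfg : Function.Exact f g)
    (hA : LnInj R n A) :
    LnInj R n B ↔ LnInj R n C := by
  constructor
  · intro hB M hM
    exact extVanish_right f g hf hg hfg M (hB M hM) (extVanish_two_of_LnInj n hA M hM)
  · intro hC M hM
    exact extVanish_middle f g hf hg hfg M (hA M hM) (hC M hM)
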